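/- For every nonnegative integer m, the maximum of g(t) over integers t with 2^m ≤ t < 2^{m+1} equals (1/9)·(m + round(2^m/3)/2^m), where round denotes the nearest integer. -/

import Mathlib

open Finset

/-- The largest odd divisor of `k`. -/
def oddPart (k : ℕ) : ℕ := ordCompl[2] k

/-- `V n = ∑_{k=1}^n α(k)/k` as a rational number. -/
def V (n : ℕ) : ℚ := ∑ k ∈ Finset.Icc 1 n, (oddPart k : ℚ) / k

/-- `v n = V n - 2n/3`. -/
def v (n : ℕ) : ℚ := V n - 2 * n / 3

/-- `U n = ∑_{k=1}^n α(k)`. -/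
def U (n : ℕ) : ℕ := ∑ k ∈ Finset.Icc 1 n, oddPart k

/-- `G n = ∑_{k=1}^n (n+1-k)·α(k)/k` as a rational number. -/
def G (n : ℕ) : ℚ := ∑ k ∈ Finset.Icc 1 n, ((n : ℚ) + 1 - k) * (oddPart k : ℚ) / k

/-- `g n = n(n+2)/3 - G n`. -/
def g (n : ℕ) : ℚ := n * (n + 2) / 3 - G n

lemma oddPart_two_mul (k : ℕ) : oddPart (2*k) = oddPart k := by
  rcases Nat.eq_zero_or_pos k with h|h
  · simp [h, oddPart]
  · rw [oddPart, oddPart, Nat.ordCompl_mul]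
    norm_num [Nat.Prime.factorization_self (by norm_num : Nat.Prime 2)]

lemma oddPart_odd {k : ℕ} (h : Odd k) : oddPart k = k := by
  obtain ⟨j, rfl⟩ := h
  rw [oddPart, Nat.factorization_eq_zero_of_not_dvd (by omega : ¬ 2 ∣ (2*j+1))]
  simp

lemma V_succ (n : ℕ) : V (n+1) = V n + (oddPart (n+1) : ℚ) / (n+1) := by
  rw [V, V, Finset.sum_Icc_succ_top (by omega : 1 ≤ n + 1)]
  push_cast; ring

lemma V_two_mul (n : ℕ) : V (2*n) = n + V n / 2 := by
  induction n with
  | zero => simp [V]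
  | succ n ih =>
    have h1 : 2*(n+1) = (2*n+1)+1 := by ring
    rw [h1, V_succ, show (2*n+1 : ℕ) = (2*n)+1 from rfl, V_succ, ih]
    rw [oddPart_odd (by exact ⟨n, rfl⟩), show (2*n+1)+1 = 2*(n+1) from by ring,
        oddPart_two_mul, V_succ]
    have hn : ((n:ℚ)+1) ≠ 0 := by positivity
    have h4 : (2*(n:ℚ)+1) ≠ 0 := by positivity
    push_cast
    field_simp
    ring

lemma v_two_mul (n : ℕ) : v (2*n) = v n / 2 := by
  rw [v, v, V_two_mul]; push_cast; ring

lemma v_odd (n : ℕ) : v (2*n+1) = v n / 2 + 1/3 := by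
  rw [v, show (2*n+1 : ℕ) = (2*n)+1 from rfl, V_succ, V_two_mul,
      oddPart_odd (⟨n, rfl⟩ : Odd (2*n+1))]
  have h2 : ((2*n+1 : ℕ) : ℚ) = 2*(n:ℚ)+1 := by push_cast; ring
  rw [h2, v]
  have h4 : (2*(n:ℚ)+1) ≠ 0 := by positivity
  field_simp
  push_cast; ring

lemma G_succ (n : ℕ) : G (n+1) = G n + V (n+1) := by
  rw [G, Finset.sum_Icc_succ_top (by omega : 1 ≤ n + 1), V_succ, G, V]
  have : ∀ k : ℕ, (((n+1 : ℕ):ℚ) + 1 - k) * (oddPart k : ℚ) / k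
      = ((n:ℚ) + 1 - k) * (oddPart k : ℚ) / k + (oddPart k : ℚ) / k := by
    intro k
    push_cast
    rw [← add_div]
    ring_nf
  rw [Finset.sum_congr rfl (fun k _ => this k), Finset.sum_add_distrib]
  push_cast
  ring

lemma g_succ (n : ℕ) : g (n+1) = g n + 1/3 - v (n+1) := by
  rw [g, g, G_succ, v]
  push_cast
  ring

lemma g_zero : g 0 = 0 := by simp [g, G]
lemma g_one : g 1 = 0 := by
  have := g_succ 0
  rw [g_zero] at this
  rw [this, v, V_succ]
  simp [V, oddPart]
  norm_num
lemma v_one : v 1 = 1/3 := by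
  rw [v, V_succ]
  simp [V, oddPart]
  norm_num

lemma g_two_mul (n : ℕ) : g (2*n) = g n + v n / 2 := by
  induction n with
  | zero => simp [g_zero, v, V]
  | succ n ih =>
    have e1 : 2*(n+1) = (2*n+1)+1 := by ring
    have h1 := g_succ (2*n+1)
    have h2 := g_succ (2*n)
    have h3 := g_succ n
    have h4 := v_odd n
    have h5 : v ((2*n+1)+1) = v (n+1) / 2 := by
      rw [show (2*n+1)+1 = 2*(n+1) from by ring, v_two_mul]
    rw [e1, h1, h2, ih, h5, h4, h3]
    ring

lemma g_odd (n : ℕ) : g (2*n+1) = g n := by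
  rw [show (2*n+1 : ℕ) = (2*n)+1 from rfl, g_succ, g_two_mul, v_odd]
  ring

noncomputable def Bnd (m : ℕ) (l : ℚ) : ℚ :=
  (1/9) * (m + 1/3 + max (2*l) (4*l-1) + (-1)^m * (min l (1-l) - 1/3) / 2^m)

lemma sign_bounds (m : ℕ) : -1 ≤ (-1:ℚ)^m ∧ (-1:ℚ)^m ≤ 1 := by
  rcases Nat.even_or_odd m with h|h
  · rw [h.neg_one_pow]; norm_num
  · rw [h.neg_one_pow]; norm_num

lemma key1' {m : ℕ} {l : ℚ} (h0 : 0 ≤ l) (hl : l ≤ 1/2) :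
    Bnd (m+1) l = Bnd m ((1+l)/2) := by
  have hP0 : (2:ℚ)^m ≠ 0 := by positivity
  rw [Bnd, Bnd,
      max_eq_right (by linarith : 2*((1+l)/2) ≤ 4*((1+l)/2)-1),
      min_eq_right (by linarith : 1-(1+l)/2 ≤ (1+l)/2),
      max_eq_left (by linarith : 4*l-1 ≤ 2*l), min_eq_left (by linarith : l ≤ 1-l),
      pow_succ (-1:ℚ), pow_succ (2:ℚ)]
  push_cast
  field_simp
  ring

lemma key2' {m : ℕ} {l : ℚ} (hl : 1/2 ≤ l) (h1 : l ≤ 1) :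
    Bnd (m+1) l = Bnd m (l/2) + l/3 := by
  have hP0 : (2:ℚ)^m ≠ 0 := by positivity
  rw [Bnd, Bnd,
      max_eq_left (by linarith : 4*(l/2)-1 ≤ 2*(l/2)),
      min_eq_left (by linarith : l/2 ≤ 1-l/2),
      max_eq_right (by linarith : 2*l ≤ 4*l-1), min_eq_right (by linarith : 1-l ≤ l),
      pow_succ (-1:ℚ), pow_succ (2:ℚ)]
  push_cast
  field_simp
  ring

lemma key1 {m : ℕ} {l : ℚ} (h0 : 0 ≤ l) (h1 : l ≤ 1) :
    Bnd m ((1+l)/2) ≤ Bnd (m+1) l := by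
  rcases le_total l (1/2) with hl|hl
  · exact (key1' h0 hl).ge
  · have hP : (1:ℚ) ≤ 2^m := one_le_pow₀ (by norm_num)
    have hP0 : (2:ℚ)^m ≠ 0 := by positivity
    have hdiff : Bnd (m+1) l - Bnd m ((1+l)/2)
        = (2*l-1) * (2*2^m + (-1:ℚ)^m) / (18*2^m) := by
      rw [Bnd, Bnd,
          max_eq_right (by linarith : 2*((1+l)/2) ≤ 4*((1+l)/2)-1),
          min_eq_right (by linarith : 1-(1+l)/2 ≤ (1+l)/2),
          max_eq_right (by linarith : 2*l ≤ 4*l-1), min_eq_right (by linarith : 1-l ≤ l),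
          pow_succ (-1:ℚ), pow_succ (2:ℚ)]
      push_cast
      field_simp
      ring
    have hs := sign_bounds m
    have hnum : 0 ≤ (2*l-1) * (2*2^m + (-1:ℚ)^m) :=
      mul_nonneg (by linarith) (by linarith)
    have : 0 ≤ Bnd (m+1) l - Bnd m ((1+l)/2) := by
      rw [hdiff]; positivity
    linarith

lemma key2 {m : ℕ} {l : ℚ} (h0 : 0 ≤ l) (h1 : l ≤ 1) :
    Bnd m (l/2) + l/3 ≤ Bnd (m+1) l := by
  rcases le_total l (1/2) with hl|hl
  · have hP : (1:ℚ) ≤ 2^m := one_le_pow₀ (by norm_num)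
    have hP0 : (2:ℚ)^m ≠ 0 := by positivity
    have hdiff : Bnd (m+1) l - (Bnd m (l/2) + l/3)
        = (1-2*l) * (2*2^m + (-1:ℚ)^m) / (18*2^m) := by
      rw [Bnd, Bnd,
          max_eq_left (by linarith : 4*(l/2)-1 ≤ 2*(l/2)),
          min_eq_left (by linarith : l/2 ≤ 1-l/2),
          max_eq_left (by linarith : 4*l-1 ≤ 2*l), min_eq_left (by linarith : l ≤ 1-l),
          pow_succ (-1:ℚ), pow_succ (2:ℚ)]
      push_cast
      field_simp
      ring
    have hs := sign_bounds m
    have hnum : 0 ≤ (1-2*l) * (2*2^m + (-1:ℚ)^m) :=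
      mul_nonneg (by linarith) (by linarith)
    have : 0 ≤ Bnd (m+1) l - (Bnd m (l/2) + l/3) := by
      rw [hdiff]; positivity
    linarith
  · exact (key2' hl h1).ge

lemma Bnd_zero_eq {l : ℚ} (h0 : 0 ≤ l) (h1 : l ≤ 1) : Bnd 0 l = l/3 := by
  rw [Bnd]
  rcases le_total l (1/2) with hl|hl
  · rw [max_eq_left (by linarith), min_eq_left (by linarith)]
    push_cast; ring
  · rw [max_eq_right (by linarith), min_eq_right (by linarith)]
    push_cast; ring

lemma g_v_le_Bnd : ∀ m t, 2^m ≤ t → t < 2^(m+1) → ∀ l : ℚ, 0 ≤ l → l ≤ 1 →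
    g t + l * v t ≤ Bnd m l := by
  intro m
  induction m with
  | zero =>
    intro t h1 h2 l hl0 hl1
    have : t = 1 := by omega
    subst this
    rw [g_one, v_one, Bnd_zero_eq hl0 hl1]
    linarith
  | succ m ih =>
    intro t h1 h2 l hl0 hl1
    have hp : (2:ℕ)^(m+1) = 2*2^m := by ring
    have hp2 : (2:ℕ)^(m+2) = 2*(2*2^m) := by ring
    rcases Nat.even_or_odd t with ⟨n, hn⟩ | ⟨n, hn⟩
    · have hn' : t = 2*n := by omega
      subst hn'
      have hb1 : 2^m ≤ n := by omega
      have hb2 : n < 2^(m+1) := by omega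
      have := ih n hb1 hb2 ((1+l)/2) (by linarith) (by linarith)
      calc g (2*n) + l * v (2*n) = g n + ((1+l)/2) * v n := by
            rw [g_two_mul, v_two_mul]; ring
        _ ≤ Bnd m ((1+l)/2) := this
        _ ≤ Bnd (m+1) l := key1 hl0 hl1
    · have hn' : t = 2*n+1 := by omega
      subst hn'
      have hb1 : 2^m ≤ n := by omega
      have hb2 : n < 2^(m+1) := by omega
      have := ih n hb1 hb2 (l/2) (by linarith) (by linarith)
      calc g (2*n+1) + l * v (2*n+1) = (g n + (l/2) * v n) + l/3 := by
            rw [g_odd, v_odd]; ring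
        _ ≤ Bnd m (l/2) + l/3 := by linarith
        _ ≤ Bnd (m+1) l := key2 hl0 hl1

/-- the sequence of λ values along the optimal path, from the top. -/
def mu : ℕ → ℚ
  | 0 => 0
  | k+1 => if mu k ≤ 1/2 then (1 + mu k)/2 else mu k / 2

lemma mu_mem : ∀ k, 0 ≤ mu k ∧ mu k ≤ 1 := by
  intro k
  induction k with
  | zero => norm_num [mu]
  | succ k ih =>
    rw [mu]
    rcases le_or_gt (mu k) (1/2) with h|h
    · rw [if_pos h]; constructor <;> linarith [ih.1, ih.2]
    · rw [if_neg (by linarith)]; constructor <;> linarith [ih.1, ih.2]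

lemma exists_opt : ∀ j k, ∃ t, 2^j ≤ t ∧ t < 2^(j+1) ∧
    g t + mu k * v t = Bnd j (mu k) := by
  intro j
  induction j with
  | zero =>
    intro k
    exact ⟨1, by norm_num, by norm_num,
      by rw [g_one, v_one, Bnd_zero_eq (mu_mem k).1 (mu_mem k).2]; ring⟩
  | succ j ih =>
    intro k
    obtain ⟨t, h1, h2, heq⟩ := ih (k+1)
    have hm0 := (mu_mem k).1
    have hm1 := (mu_mem k).2
    have hp : (2:ℕ)^(j+1) = 2*2^j := by ring
    have hp2 : (2:ℕ)^(j+2) = 2*(2*2^j) := by ring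
    rcases le_or_gt (mu k) (1/2) with h|h
    · refine ⟨2*t, by omega, by omega, ?_⟩
      have hmu : mu (k+1) = (1 + mu k)/2 := by rw [mu, if_pos h]
      rw [hmu] at heq
      rw [g_two_mul, v_two_mul, key1' hm0 h, ← heq]; ring
    · refine ⟨2*t+1, by omega, by omega, ?_⟩
      have hmu : mu (k+1) = mu k / 2 := by rw [mu, if_neg (by linarith)]
      rw [hmu] at heq
      rw [g_odd, v_odd, key2' (le_of_lt h) hm1, ← heq]; ring

/-- integer `(2^m - (-1)^m)/3`. -/
def rI : ℕ → ℤ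
  | 0 => 0
  | m+1 => 2^m - rI m

lemma rI_spec : ∀ m, 3 * rI m = 2^m - (-1:ℤ)^m := by
  intro m
  induction m with
  | zero => simp [rI]
  | succ m ih =>
    rw [rI]
    push_cast
    rw [pow_succ (2:ℤ), pow_succ (-1:ℤ)]
    linarith

lemma round_pow_div_three (m : ℕ) : round ((2:ℚ)^m / 3) = rI m := by
  have h3 : 3 * (rI m : ℚ) = 2^m - (-1:ℚ)^m := by exact_mod_cast rI_spec m
  rw [round_eq, Int.floor_eq_iff]
  rcases sign_bounds m with ⟨hs1, hs2⟩
  rcases Nat.even_or_odd m with h|h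
  · rw [h.neg_one_pow] at h3
    constructor <;> [skip; push_cast] <;> nlinarith
  · rw [h.neg_one_pow] at h3
    constructor <;> [skip; push_cast] <;> nlinarith

lemma Bnd_zero' (m : ℕ) : Bnd m 0 = (1/9) * ((m : ℚ) + (rI m : ℚ) / 2^m) := by
  have h3 : 3 * (rI m : ℚ) = 2^m - (-1:ℚ)^m := by exact_mod_cast rI_spec m
  have hP0 : (2:ℚ)^m ≠ 0 := by positivity
  rw [Bnd, max_eq_left (by norm_num), min_eq_left (by norm_num)]
  have hr : (rI m : ℚ) = (2^m - (-1:ℚ)^m)/3 := by linarith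
  rw [hr]
  field_simp
  ring

theorem stmt19 (m : ℕ) :
    IsGreatest {x : ℚ | ∃ t : ℕ, 2 ^ m ≤ t ∧ t < 2 ^ (m + 1) ∧ g t = x}
      ((1 / 9) * ((m : ℚ) + (round ((2 : ℚ) ^ m / 3) : ℚ) / 2 ^ m)) := by
  have hM : (1 / 9 : ℚ) * ((m : ℚ) + (round ((2 : ℚ) ^ m / 3) : ℚ) / 2 ^ m) = Bnd m 0 := by
    rw [round_pow_div_three, Bnd_zero']
  rw [hM]
  constructor
  · obtain ⟨t, h1, h2, heq⟩ := exists_opt m 0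
    refine ⟨t, h1, h2, ?_⟩
    simpa [mu] using heq
  · rintro x ⟨t, h1, h2, rfl⟩
    have := g_v_le_Bnd m t h1 h2 0 le_rfl (by norm_num)
    linarith
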